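/- Posterior covariance monotonicity under sequential updates: each sequential data update step strictly does not increase the covariance in the Loewner order, i.e., S₁ = (I − Kh)S₀(I − Kh)' + γKK' ⪯ S₀ where K = S₀h'/(γ + hS₀h'), with equality iff hS₀ = 0. -/

import Mathlib

open Matrix

/-- Posterior covariance monotonicity under sequential updates:
`S₁ = (I − Kh)S₀(I − Kh)ᵀ + γKKᵀ ⪯ S₀` in the Loewner order, where
`K = S₀hᵀ/(γ + hS₀hᵀ)`, with equality iff `hS₀ = 0`. -/
theorem stmt16 {n : ℕ} (S₀ : Matrix (Fin n) (Fin n) ℝ)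
    (h : Matrix (Fin 1) (Fin n) ℝ) (γ : ℝ)
    (hS₀ : S₀.PosDef) (hγ : 0 < γ)
    (K : Matrix (Fin n) (Fin 1) ℝ)
    (hK : K = (γ + (h * S₀ * hᵀ) 0 0)⁻¹ • (S₀ * hᵀ))
    (S₁ : Matrix (Fin n) (Fin n) ℝ)
    (hS₁ : S₁ = (1 - K * h) * S₀ * (1 - K * h)ᵀ + γ • (K * Kᵀ)) :
    (S₀ - S₁).PosSemidef ∧ (S₁ = S₀ ↔ h * S₀ = 0) := by
  have hsym : S₀ᵀ = S₀ := by
    have := hS₀.isHermitian.eq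
    rwa [conjTranspose_eq_transpose_of_trivial] at this
  obtain ⟨q, hq_def⟩ : ∃ q : ℝ, q = (h * S₀ * hᵀ) 0 0 := ⟨_, rfl⟩
  obtain ⟨A, hA_def⟩ : ∃ A : Matrix (Fin n) (Fin 1) ℝ, A = S₀ * hᵀ := ⟨_, rfl⟩
  obtain ⟨c, hc_def⟩ : ∃ c : ℝ, c = γ + q := ⟨_, rfl⟩
  rw [← hq_def, ← hA_def, ← hc_def] at hK
  have hAT : Aᵀ = h * S₀ := by
    rw [hA_def, transpose_mul, transpose_transpose, hsym]
  have hqpsd : (h * S₀ * hᵀ).PosSemidef := by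
    have := hS₀.posSemidef.mul_mul_conjTranspose_same h
    rwa [conjTranspose_eq_transpose_of_trivial] at this
  have hq0 : 0 ≤ q := by
    have := hqpsd.diag_nonneg (i := 0)
    rw [hq_def]
    exact this
  have hc : 0 < c := by rw [hc_def]; positivity
  have hcne : c ≠ 0 := hc.ne'
  have hq1 : Aᵀ * hᵀ = q • (1 : Matrix (Fin 1) (Fin 1) ℝ) := by
    rw [hAT]
    ext i j
    fin_cases i; fin_cases j
    simp [hq_def]
  have hKT : Kᵀ = c⁻¹ • Aᵀ := by rw [hK, transpose_smul]
  have h1 : K * h * S₀ = c⁻¹ • (A * Aᵀ) := by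
    rw [hK, Matrix.smul_mul, Matrix.smul_mul, Matrix.mul_assoc, ← hAT]
  have h2 : S₀ * (K * h)ᵀ = c⁻¹ • (A * Aᵀ) := by
    rw [transpose_mul, hKT, Matrix.mul_smul, Matrix.mul_smul, ← Matrix.mul_assoc, ← hA_def]
  have h3 : K * h * S₀ * (K * h)ᵀ = (c⁻¹ * c⁻¹ * q) • (A * Aᵀ) := by
    rw [h1, transpose_mul, hKT, Matrix.mul_smul, Matrix.mul_smul, Matrix.smul_mul,
      smul_smul, Matrix.mul_assoc A Aᵀ, ← Matrix.mul_assoc Aᵀ hᵀ Aᵀ, hq1, Matrix.smul_mul,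
      Matrix.one_mul, Matrix.mul_smul, smul_smul]
  have h4 : γ • (K * Kᵀ) = (γ * (c⁻¹ * c⁻¹)) • (A * Aᵀ) := by
    rw [hK, transpose_smul, Matrix.smul_mul, Matrix.mul_smul, smul_smul, smul_smul, mul_assoc]
  have expand : (1 - K * h) * S₀ * (1 - K * h)ᵀ
      = S₀ - K * h * S₀ - S₀ * (K * h)ᵀ + K * h * S₀ * (K * h)ᵀ := by
    rw [transpose_sub, transpose_one]
    noncomm_ring
  have hkey : S₀ - S₁ = c⁻¹ • (A * Aᵀ) := by
    rw [hS₁, expand, h3, h1, h2, h4]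
    rw [hc_def] at hcne ⊢
    match_scalars <;> field_simp [hcne] <;> ring
  constructor
  · rw [hkey]
    have hfac : c⁻¹ • (A * Aᵀ) = (Real.sqrt c⁻¹ • A) * (Real.sqrt c⁻¹ • A)ᴴ := by
      rw [conjTranspose_smul, conjTranspose_eq_transpose_of_trivial, star_trivial,
        Matrix.smul_mul, Matrix.mul_smul, smul_smul,
        Real.mul_self_sqrt (inv_nonneg.mpr hc.le)]
    rw [hfac]
    exact posSemidef_self_mul_conjTranspose _
  · constructor
    · intro hEq
      have h0 : c⁻¹ • (A * Aᵀ) = 0 := by rw [← hkey, hEq, sub_self]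
      have hAA : A * Aᵀ = 0 := by
        rcases smul_eq_zero.mp h0 with hi | hz
        · exact absurd hi (inv_ne_zero hcne)
        · exact hz
      have : (Aᵀ)ᴴ * Aᵀ = 0 := by
        rwa [conjTranspose_eq_transpose_of_trivial, transpose_transpose]
      have hAz : Aᵀ = 0 := conjTranspose_mul_self_eq_zero.mp this
      rwa [hAT] at hAz
    · intro h0
      have hAz : A = 0 := by
        have hT : Aᵀ = 0 := by rw [hAT, h0]
        calc A = Aᵀᵀ := (transpose_transpose A).symm
        _ = 0 := by rw [hT, transpose_zero]
      have hz : S₀ - S₁ = 0 := by rw [hkey, hAz]; simp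
      exact (sub_eq_zero.mp hz).symm
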